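/- If G is a 4-regular simple graph in which every edge lies in a triangle, and T = {xy, yz, zx} is an eligible triangle of G, then the graph G' obtained by Operation 2 (deleting the edges of T and adding two new adjacent vertices u, v each adjacent to x, y, z) is 4-regular and every edge of G' lies in a triangle. -/

import Mathlib

/-- If `G` is a quartic simple graph with the triangle property and
`T = {xy, yz, zx}` is an eligible triangle of `G`, then the graph `G'`
obtained by Operation 2 (delete the edges of `T`, add two new adjacent
vertices `u`, `v` each adjacent to `x`, `y`, `z`) is 4-regular and has the
triangle property. -/
theorem operation2_preserves_triangle_property {V : Type*} (G : SimpleGraph V)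
    (hreg : ∀ u : V, (G.neighborSet u).ncard = 4)
    (htri : ∀ u v : V, G.Adj u v → ∃ w : V, G.Adj u w ∧ G.Adj v w)
    (x y z : V) (hxy : G.Adj x y) (hyz : G.Adj y z) (hxz : G.Adj x z)
    (heligible : ∀ u v : V,
      (G.deleteEdges {s(x, y), s(y, z), s(x, z)}).Adj u v →
      ∃ w : V, (G.deleteEdges {s(x, y), s(y, z), s(x, z)}).Adj u w ∧
        (G.deleteEdges {s(x, y), s(y, z), s(x, z)}).Adj v w) :
    let G' : SimpleGraph (V ⊕ Fin 2) :=
      SimpleGraph.fromRel (fun a b =>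
        match a, b with
        | Sum.inl p, Sum.inl q =>
            G.Adj p q ∧ s(p, q) ∉ ({s(x, y), s(y, z), s(x, z)} : Set (Sym2 V))
        | Sum.inl p, Sum.inr _ => p = x ∨ p = y ∨ p = z
        | Sum.inr _, Sum.inl _ => False
        | Sum.inr _, Sum.inr _ => True)
    (∀ a : V ⊕ Fin 2, (G'.neighborSet a).ncard = 4) ∧
      (∀ a b : V ⊕ Fin 2, G'.Adj a b → ∃ c : V ⊕ Fin 2, G'.Adj a c ∧ G'.Adj b c) := by
  classical
  intro G'
  have hne1 : x ≠ y := hxy.ne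
  have hne2 : y ≠ z := hyz.ne
  have hne3 : x ≠ z := hxz.ne
  have hne1' : y ≠ x := hne1.symm
  have hne2' : z ≠ y := hne2.symm
  have hne3' : z ≠ x := hne3.symm
  have hT : ∀ p q : V, (s(q,p) : Sym2 V) ∈ ({s(x,y), s(y,z), s(x,z)} : Set (Sym2 V)) ↔
      (s(p,q) : Sym2 V) ∈ ({s(x,y), s(y,z), s(x,z)} : Set (Sym2 V)) := by
    intro p q
    rw [show (s(q,p) : Sym2 V) = s(p,q) from Sym2.eq_swap]
  have hAdjII : ∀ p q : V, G'.Adj (Sum.inl p) (Sum.inl q) ↔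
      (G.Adj p q ∧ (s(p,q) : Sym2 V) ∉ ({s(x,y), s(y,z), s(x,z)} : Set (Sym2 V))) := by
    intro p q
    simp only [G', SimpleGraph.fromRel_adj]
    constructor
    · rintro ⟨hne, h | h⟩
      · exact h
      · exact ⟨h.1.symm, fun hm => h.2 ((hT p q).mpr hm)⟩
    · intro h
      exact ⟨by simp [h.1.ne], Or.inl h⟩
  have hAdjIR : ∀ (p : V) (i : Fin 2), G'.Adj (Sum.inl p) (Sum.inr i) ↔
      (p = x ∨ p = y ∨ p = z) := by
    intro p i
    simp [G', SimpleGraph.fromRel_adj]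
  have hAdjRR : ∀ i j : Fin 2, G'.Adj (Sum.inr i) (Sum.inr j) ↔ i ≠ j := by
    intro i j
    simp [G', SimpleGraph.fromRel_adj, Sum.inr.injEq]
  have hsucc : ∀ i : Fin 2, i + 1 ≠ i := by decide
  have hsucc' : ∀ i j : Fin 2, j ≠ i ↔ j = i + 1 := by decide
  have hTx : ∀ q : V, (s(x,q) : Sym2 V) ∈ ({s(x,y), s(y,z), s(x,z)} : Set (Sym2 V)) ↔
      (q = y ∨ q = z) := by
    intro q
    simp only [Set.mem_insert_iff, Set.mem_singleton_iff, Sym2.eq_iff]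
    tauto
  have hTy : ∀ q : V, (s(y,q) : Sym2 V) ∈ ({s(x,y), s(y,z), s(x,z)} : Set (Sym2 V)) ↔
      (q = x ∨ q = z) := by
    intro q
    simp only [Set.mem_insert_iff, Set.mem_singleton_iff, Sym2.eq_iff]
    tauto
  have hTz : ∀ q : V, (s(z,q) : Sym2 V) ∈ ({s(x,y), s(y,z), s(x,z)} : Set (Sym2 V)) ↔
      (q = x ∨ q = y) := by
    intro q
    simp only [Set.mem_insert_iff, Set.mem_singleton_iff, Sym2.eq_iff]
    tauto
  have hNfin : ∀ p : V, (G.neighborSet p).Finite := fun p =>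
    Set.finite_of_ncard_ne_zero (by rw [hreg p]; norm_num)
  refine ⟨?_, ?_⟩
  · -- degrees
    have key : ∀ p a b : V, p = x ∨ p = y ∨ p = z → G.Adj p a → G.Adj p b → a ≠ b →
        (∀ q : V, (s(p,q) : Sym2 V) ∈ ({s(x,y), s(y,z), s(x,z)} : Set (Sym2 V)) ↔
          (q = a ∨ q = b)) →
        (G'.neighborSet (Sum.inl p)).ncard = 4 := by
      intro p a b hp hpa hpb hab hTp
      have hset : G'.neighborSet (Sum.inl p) =
          Sum.inl '' (G.neighborSet p \ {a, b}) ∪ {Sum.inr 0, Sum.inr 1} := by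
        ext c
        match c with
        | Sum.inl q =>
          simp only [SimpleGraph.mem_neighborSet, hAdjII, hTp, Set.mem_union,
            Set.mem_image, Set.mem_diff, Set.mem_insert_iff, Set.mem_singleton_iff]
          constructor
          · rintro ⟨h1, h2⟩
            exact Or.inl ⟨q, ⟨h1, h2⟩, rfl⟩
          · rintro (⟨q', ⟨h1, h2⟩, hq⟩ | (h | h)) <;> first
              | (cases hq; exact ⟨h1, h2⟩) | simp at h
        | Sum.inr i =>
          simp only [SimpleGraph.mem_neighborSet, Set.mem_union, Set.mem_image,
            Set.mem_insert_iff, Set.mem_singleton_iff]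
          constructor
          · intro _
            fin_cases i <;> simp
          · intro _
            exact (hAdjIR p i).mpr hp
      rw [hset]
      have hsub : ({a, b} : Set V) ⊆ G.neighborSet p := by
        rintro q (rfl | rfl)
        · exact hpa
        · exact hpb
      have hdfin : (G.neighborSet p \ {a, b}).Finite := (hNfin p).diff
      rw [Set.ncard_union_eq ?_ (hdfin.image _) ((Set.finite_singleton _).insert _)]
      · rw [Set.ncard_image_of_injective _ Sum.inl_injective,
          Set.ncard_diff hsub ((Set.finite_singleton _).insert _),
          hreg p, Set.ncard_pair hab, Set.ncard_pair (by simp)]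
      · rw [Set.disjoint_left]
        rintro c ⟨q', _, rfl⟩ (h | h) <;> simp at h
    intro c
    match c with
    | Sum.inl p =>
      by_cases hp : p = x ∨ p = y ∨ p = z
      · rcases hp with rfl | rfl | rfl
        · exact key p y z (Or.inl rfl) hxy hxz hne2 hTx
        · exact key p x z (Or.inr (Or.inl rfl)) hxy.symm hyz hne3 hTy
        · exact key p x y (Or.inr (Or.inr rfl)) hxz.symm hyz.symm hne1 hTz
      · have hset : G'.neighborSet (Sum.inl p) = Sum.inl '' G.neighborSet p := by
          ext c
          match c with
          | Sum.inl q =>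
            simp only [SimpleGraph.mem_neighborSet, hAdjII, Set.mem_image,
              Set.mem_insert_iff, Set.mem_singleton_iff]
            constructor
            · rintro ⟨h1, _⟩
              exact ⟨q, h1, rfl⟩
            · rintro ⟨q', h1, hq⟩
              cases hq
              refine ⟨h1, fun hm => hp ?_⟩
              simp only [Set.mem_insert_iff, Set.mem_singleton_iff, Sym2.eq_iff] at hm
              tauto
          | Sum.inr i =>
            simp only [SimpleGraph.mem_neighborSet, hAdjIR, Set.mem_image]
            constructor
            · intro h
              exact absurd h hp
            · rintro ⟨q', _, hq⟩
              simp at hq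
        rw [hset, Set.ncard_image_of_injective _ Sum.inl_injective, hreg p]
    | Sum.inr i =>
      have hset : G'.neighborSet (Sum.inr i) =
          {Sum.inl x, Sum.inl y, Sum.inl z, Sum.inr (i + 1)} := by
        ext c
        match c with
        | Sum.inl q =>
          simp only [SimpleGraph.mem_neighborSet, Set.mem_insert_iff, Set.mem_singleton_iff]
          constructor
          · intro h
            have := (hAdjIR q i).mp h.symm
            rcases this with rfl | rfl | rfl <;> simp
          · rintro (h | h | h | h)
            · obtain rfl := Sum.inl_injective h
              exact ((hAdjIR q i).mpr (by simp)).symm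
            · obtain rfl := Sum.inl_injective h
              exact ((hAdjIR q i).mpr (by simp)).symm
            · obtain rfl := Sum.inl_injective h
              exact ((hAdjIR q i).mpr (by simp)).symm
            · exact absurd h (by simp)
        | Sum.inr j =>
          simp only [SimpleGraph.mem_neighborSet, hAdjRR, Set.mem_insert_iff,
            Set.mem_singleton_iff, Sum.inr.injEq]
          constructor
          · intro h
            exact Or.inr (Or.inr (Or.inr ((hsucc' i j).mp (Ne.symm h))))
          · rintro (h | h | h | rfl)
            · exact absurd h (by simp)
            · exact absurd h (by simp)
            · exact absurd h (by simp)
            · exact Ne.symm (hsucc i)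
      rw [hset]
      rw [Set.ncard_insert_of_notMem (by simp [hne1, hne3])
          (((Set.finite_singleton _).insert _).insert _),
        Set.ncard_insert_of_notMem (by simp [hne2]) ((Set.finite_singleton _).insert _),
        Set.ncard_insert_of_notMem (by simp) (Set.finite_singleton _),
        Set.ncard_singleton]
  · intro a b hab
    match a, b with
    | Sum.inl p, Sum.inl q =>
      rw [hAdjII] at hab
      obtain ⟨w, hw1, hw2⟩ := heligible p q (by rw [SimpleGraph.deleteEdges_adj]; exact hab)
      rw [SimpleGraph.deleteEdges_adj] at hw1 hw2
      exact ⟨Sum.inl w, (hAdjII p w).mpr hw1, (hAdjII q w).mpr hw2⟩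
    | Sum.inl p, Sum.inr i =>
      exact ⟨Sum.inr (i+1), (hAdjIR p (i+1)).mpr ((hAdjIR p i).mp hab),
        ((hAdjRR (i+1) i).mpr (hsucc i)).symm⟩
    | Sum.inr i, Sum.inl p =>
      exact ⟨Sum.inr (i+1), (hAdjRR i (i+1)).mpr (hsucc i).symm,
        (hAdjIR p (i+1)).mpr ((hAdjIR p i).mp hab.symm)⟩
    | Sum.inr i, Sum.inr j =>
      exact ⟨Sum.inl x, ((hAdjIR x i).mpr (Or.inl rfl)).symm,
        ((hAdjIR x j).mpr (Or.inl rfl)).symm⟩
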